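/- Let K be a field and let f, g ∈ K[X] with g ≠ 0 full (g.coeff 0 ≠ 0) and natDegree g ≤ natDegree f; set δ = natDegree f − natDegree g. Then there exists a unique pair (q, r) of polynomials in K[X] such that f = g * q + X^(δ+1) * r, natDegree q ≤ δ, and degree r < degree g. -/

import Mathlib

open Polynomial

/-- Trail division over a field: existence and uniqueness of the trail quotient and
trail remainder. -/
theorem trail_division_field {K : Type*} [Field K] (f g : K[X])
    (hg : g ≠ 0) (hg0 : g.coeff 0 ≠ 0) (hdeg : g.natDegree ≤ f.natDegree) :
    ∃! qr : K[X] × K[X],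
      f = g * qr.1 + X ^ (f.natDegree - g.natDegree + 1) * qr.2 ∧
      qr.1.natDegree ≤ f.natDegree - g.natDegree ∧ qr.2.degree < g.degree := by
  set δ := f.natDegree - g.natDegree with hδ
  set n := δ + 1 with hn
  have hgc : PowerSeries.constantCoeff (g : PowerSeries K) ≠ 0 := by
    simpa using hg0
  set h : PowerSeries K := (f : PowerSeries K) * (g : PowerSeries K)⁻¹ with hh
  set q : K[X] := PowerSeries.trunc n h with hq
  have hgh : (g : PowerSeries K) * h = (f : PowerSeries K) := by
    rw [hh, mul_comm ((f : PowerSeries K)), ← mul_assoc, PowerSeries.mul_inv_cancel _ hgc, one_mul]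
  have hdvd : (X : K[X]) ^ n ∣ f - g * q := by
    rw [Polynomial.X_pow_dvd_iff]
    intro d hd
    rw [coeff_sub, sub_eq_zero]
    have h1 : f.coeff d = PowerSeries.coeff d ((g : PowerSeries K) * h) := by
      rw [hgh, Polynomial.coeff_coe]
    rw [h1, coeff_mul, PowerSeries.coeff_mul]
    refine Finset.sum_congr rfl fun x hx => ?_
    replace hx : x.1 + x.2 = d := by simpa using hx
    have hb : x.2 < n := lt_of_le_of_lt (hx ▸ Nat.le_add_left x.2 x.1) hd
    rw [hq, PowerSeries.coeff_trunc, if_pos hb, Polynomial.coeff_coe]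
  set r : K[X] := (f - g * q) / (X ^ n) with hr
  have hXn : (X : K[X]) ^ n ≠ 0 := pow_ne_zero _ X_ne_zero
  have hfr : X ^ n * r = f - g * q := EuclideanDomain.mul_div_cancel' hXn hdvd
  have hqdeg : q.natDegree ≤ δ := by
    rcases eq_or_ne q 0 with h0 | h0
    · simp [h0]
    · have := PowerSeries.degree_trunc_lt h n
      rw [← hq] at this
      have := natDegree_lt_iff_degree_lt h0 |>.mpr this
      omega
  have hsub : (f - g * q).natDegree ≤ f.natDegree := by
    refine (natDegree_sub_le f (g * q)).trans (max_le le_rfl ?_)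
    refine (natDegree_mul_le).trans ?_
    omega
  have hrdeg : r.degree < g.degree := by
    rcases eq_or_ne r 0 with h0 | h0
    · rw [h0, degree_zero]
      exact Ne.bot_lt (fun hb => hg (degree_eq_bot.mp hb))
    · have h3 : n + r.natDegree ≤ f.natDegree := by
        have hm : (X ^ n * r).natDegree = n + r.natDegree := by
          rw [natDegree_mul hXn h0, natDegree_X_pow]
        rw [← hm, hfr]; exact hsub
      have h4 : r.natDegree < g.natDegree := by omega
      exact degree_lt_degree h4
  refine ⟨(q, r), ⟨by show f = g * q + X ^ n * r; rw [hfr]; ring, hqdeg, hrdeg⟩, ?_⟩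
  rintro ⟨q', r'⟩ ⟨heq', hq', hr'⟩
  have hfeq : f = g * q + X ^ n * r := by rw [hfr]; ring
  have key : g * (q' - q) = X ^ n * (r - r') := by
    have := heq'.symm.trans hfeq
    simp only at this ⊢
    linear_combination this
  have hXg : ¬ (X : K[X]) ∣ g := by
    rw [Polynomial.X_dvd_iff]; exact hg0
  have hdvd2 : (X : K[X]) ^ n ∣ q' - q := by
    refine (prime_X (R := K)).pow_dvd_of_dvd_mul_left n hXg ?_
    rw [key]; exact dvd_mul_right _ _
  have hq0 : q' - q = 0 := by
    by_contra h0
    have := Polynomial.natDegree_le_of_dvd hdvd2 h0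
    rw [natDegree_X_pow] at this
    have h1 : (q' - q).natDegree ≤ δ :=
      (natDegree_sub_le q' q).trans (max_le hq' hqdeg)
    omega
  have hqq : q' = q := sub_eq_zero.mp hq0
  have hrr : r' = r := by
    have h5 : X ^ n * r' = X ^ n * r := by
      have := heq'.symm.trans hfeq
      simp only [hqq] at this
      linear_combination this
    exact mul_left_cancel₀ hXn h5
  simp [Prod.ext_iff, hqq, hrr]
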